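/- On the star graph where all n edges have length d with γ^d = 1/2, a policy that collects the n/2 clique-connected rewards last achieves value at most 24/n times the optimum, when γ = 1 - 1/n. -/

import Mathlib

/-- On the star graph where all edges have length `d` with `γ^d = 1/2` and
`γ = 1 - 1/n`, a deterministic local policy that collects the `n/2`
clique-connected rewards last achieves at most `24/n` of the optimum. -/
theorem det_local_star_bound (n : ℕ) (hn : 2 ≤ n) (hev : Even n)
    (γ d : ℝ) (hγ : γ = 1 - 1/(n:ℝ)) (hd : γ ^ d = 1/2) :
    (γ ^ (-d) * ∑ i ∈ Finset.Icc 1 (n/2), γ ^ ((2*(i:ℝ)-1)*d)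
        + γ ^ ((n:ℝ)*d + 1) * ∑ i ∈ Finset.range (n/2), γ ^ i)
      / (∑ i ∈ Finset.range (n/2), γ ^ i
        + γ ^ (2*d + (n:ℝ)/2 - 1) * ∑ i ∈ Finset.Icc 1 (n/2), γ ^ ((2*(i:ℝ)-1)*d))
      ≤ 24 / n := by
  have hn2 : (2:ℝ) ≤ (n:ℝ) := by exact_mod_cast hn
  have hnpos : (0:ℝ) < n := by linarith
  have hγ0 : 0 < γ := by
    rw [hγ]
    have : 1/(n:ℝ) ≤ 1/2 := by
      apply one_div_le_one_div_of_le <;> linarith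
    linarith
  have hγ1 : γ < 1 := by
    rw [hγ]
    have : 0 < 1/(n:ℝ) := by positivity
    linarith
  have hd0 : 0 ≤ d := by
    by_contra h
    push_neg at h
    have : 1 < γ ^ d := by
      rw [Real.one_lt_rpow_iff_of_pos hγ0]
      right; exact ⟨hγ1, h⟩
    rw [hd] at this; linarith
  set m := n / 2 with hm
  have hmn : (m:ℝ) * 2 = n := by
    have : m * 2 = n := Nat.div_mul_cancel hev.two_dvd
    exact_mod_cast this
  set S : ℝ := ∑ i ∈ Finset.range m, γ ^ i with hS
  set T : ℝ := ∑ i ∈ Finset.Icc 1 m, γ ^ ((2*(i:ℝ)-1)*d) with hT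
  -- T ≤ 1
  have hT1 : T ≤ 1 := by
    have hstep : ∀ i ∈ Finset.Icc 1 m, γ ^ ((2*(i:ℝ)-1)*d) ≤ (1/2:ℝ)^i := by
      intro i hi
      have hi1 : 1 ≤ i := (Finset.mem_Icc.mp hi).1
      have h1 : γ ^ ((2*(i:ℝ)-1)*d) = (1/2:ℝ) ^ (2*(i:ℝ)-1) := by
        rw [mul_comm, Real.rpow_mul hγ0.le, hd]
      rw [h1]
      have h2 : (1/2:ℝ) ^ (2*(i:ℝ)-1) ≤ (1/2:ℝ) ^ ((i:ℕ):ℝ) := by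
        apply Real.rpow_le_rpow_of_exponent_ge (by norm_num) (by norm_num)
        have : (1:ℝ) ≤ (i:ℝ) := by exact_mod_cast hi1
        linarith
      rw [Real.rpow_natCast] at h2
      exact h2
    calc T ≤ ∑ i ∈ Finset.Icc 1 m, (1/2:ℝ)^i := Finset.sum_le_sum hstep
      _ = ∑ i ∈ Finset.range m, (1/2:ℝ)^(1+i) := by
          rw [show Finset.Icc 1 m = Finset.Ico 1 (m+1) by rw [Finset.Ico_add_one_right_eq_Icc],
            Finset.sum_Ico_eq_sum_range]
          simp
      _ = (1/2) * ∑ i ∈ Finset.range m, (1/2:ℝ)^i := by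
          rw [Finset.mul_sum]
          exact Finset.sum_congr rfl (fun i _ => by rw [pow_add, pow_one])
      _ ≤ (1/2) * 2 := by
          have := sum_geometric_two_le m
          nlinarith
      _ = 1 := by norm_num
  have hT0 : 0 ≤ T := Finset.sum_nonneg (fun i _ => Real.rpow_nonneg hγ0.le _)
  -- S bounds
  have hSle : S ≤ (n:ℝ)/2 := by
    have : S ≤ ∑ _i ∈ Finset.range m, (1:ℝ) :=
      Finset.sum_le_sum (fun i _ => pow_le_one₀ hγ0.le hγ1.le)
    simp at this
    linarith
  have hSge : (n:ℝ)/4 ≤ S := by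
    have hstep : ∀ i ∈ Finset.range m, (1/2:ℝ) ≤ γ ^ i := by
      intro i hi
      have hi' : i < m := Finset.mem_range.mp hi
      have hi2 : (i:ℝ) * 2 ≤ (n:ℝ) - 2 := by
        have : (i:ℝ) + 1 ≤ (m:ℝ) := by exact_mod_cast hi'
        nlinarith
      have hbern : 1 + (i:ℝ) * (-(1/n)) ≤ (1 + (-(1/n)))^i := by
        apply one_add_mul_le_pow
        have : 1/(n:ℝ) ≤ 1/2 := by
          apply one_div_le_one_div_of_le <;> linarith
        linarith
      have hγeq : γ = 1 + (-(1/(n:ℝ))) := by rw [hγ]; ring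
      rw [hγeq]
      have : (i:ℝ)/n ≤ 1/2 := by
        rw [div_le_div_iff₀ hnpos (by norm_num)]
        linarith
      have h1 : (1:ℝ)/2 ≤ 1 + (i:ℝ) * (-(1/n)) := by
        have : (i:ℝ) * (1/n) = (i:ℝ)/n := by ring
        nlinarith
      linarith
    have : ∑ _i ∈ Finset.range m, (1/2:ℝ) ≤ S := Finset.sum_le_sum hstep
    simp at this
    nlinarith
  have hS0 : 0 ≤ S := by positivity
  -- numerator pieces
  have hneg : γ ^ (-d) = 2 := by
    rw [Real.rpow_neg hγ0.le, hd]; norm_num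
  have hpow2 : γ ^ ((n:ℝ)*d + 1) = (1/2:ℝ)^n * γ := by
    rw [Real.rpow_add hγ0, Real.rpow_one, mul_comm (n:ℝ) d, Real.rpow_mul hγ0.le, hd,
      Real.rpow_natCast]
  have hn2pow : (n:ℝ) ≤ 2^n := by
    have := Nat.lt_two_pow_self (n := n)
    have : (n:ℝ) < (2:ℝ)^n := by exact_mod_cast this
    linarith
  have hterm2 : γ ^ ((n:ℝ)*d + 1) * S ≤ 1 := by
    rw [hpow2]
    have h1 : (1/2:ℝ)^n * γ * S ≤ (1/2:ℝ)^n * 1 * ((n:ℝ)/2) := by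
      apply mul_le_mul _ hSle hS0 (by positivity)
      nlinarith [pow_nonneg (by norm_num : (0:ℝ) ≤ 1/2) n]
    have h2 : (1/2:ℝ)^n * 1 * ((n:ℝ)/2) ≤ 1 := by
      have hp : (0:ℝ) < 2^n := by positivity
      have : (1/2:ℝ)^n = 1/2^n := by rw [one_div_pow]
      rw [this]
      rw [div_mul_eq_mul_div, div_mul_eq_mul_div, div_le_one (by positivity)]
      nlinarith
    linarith
  have hnum : γ ^ (-d) * T + γ ^ ((n:ℝ)*d + 1) * S ≤ 6 := by
    rw [hneg]; linarith
  -- denominator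
  have hden2 : 0 ≤ γ ^ (2*d + (n:ℝ)/2 - 1) * T := by positivity
  have hdenge : (n:ℝ)/4 ≤ S + γ ^ (2*d + (n:ℝ)/2 - 1) * T := by linarith
  have hq : (γ ^ (-d) * T + γ ^ ((n:ℝ)*d + 1) * S)
      / (S + γ ^ (2*d + (n:ℝ)/2 - 1) * T) ≤ 6 / ((n:ℝ)/4) :=
    div_le_div₀ (by norm_num) hnum (by positivity) hdenge
  have : (6:ℝ) / ((n:ℝ)/4) = 24 / n := by
    rw [div_div_eq_mul_div]; norm_num
  linarith [hq, this.le]
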